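/- For every real b > 0, the function r ↦ (cos(br) − cos(b))/(1 − r²) (extended by its limits at r = ±1) is integrable on [−1, 1] and ∫_{−1}^1 (cos(br) − cos(b))/(1 − r²) dr = sin(b) · ∫₀^{2b} (sin u)/u du + cos(b) · ∫₀^{2b} (cos u − 1)/u du. -/

import Mathlib

open MeasureTheory

private lemma cos_lip (x y : ℝ) : |Real.cos x - Real.cos y| ≤ |x - y| := by
  have h1 : |Real.sin ((x + y) / 2)| ≤ 1 := Real.abs_sin_le_one _
  have h2 : |Real.sin ((x - y) / 2)| ≤ |(x - y) / 2| := Real.abs_sin_le_abs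
  have h3 : |(x - y) / 2| = |x - y| / 2 := by rw [abs_div]; norm_num
  rw [Real.cos_sub_cos, abs_mul, abs_mul, abs_neg, abs_two]
  rw [h3] at h2
  nlinarith [abs_nonneg (Real.sin ((x + y) / 2)), abs_nonneg (Real.sin ((x - y) / 2)),
    abs_nonneg (x - y), mul_le_mul h1 h2 (abs_nonneg _) zero_le_one]

private lemma int_bdd {f : ℝ → ℝ} {a c C : ℝ} (hm : Measurable f)
    (hC : ∀ u ∈ Set.Ioc a c, |f u| ≤ C) : IntegrableOn f (Set.Ioc a c) := by
  apply Measure.integrableOn_of_bounded (measure_Ioc_lt_top).ne hm.aestronglyMeasurable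
  filter_upwards [ae_restrict_mem measurableSet_Ioc] with u hu
  simpa using hC u hu

/-- The key step in the proof of Theorem 9.3, expressed via the sine and cosine integrals. -/
theorem stmt_12 (b : ℝ) (hb : 0 < b) :
    IntegrableOn (fun r : ℝ => (Real.cos (b * r) - Real.cos b) / (1 - r ^ 2))
      (Set.Icc (-1) 1) ∧
    ∫ r in Set.Icc (-1 : ℝ) 1, (Real.cos (b * r) - Real.cos b) / (1 - r ^ 2)
      = Real.sin b * (∫ u in Set.Ioc (0 : ℝ) (2 * b), Real.sin u / u)
        + Real.cos b * ∫ u in Set.Ioc (0 : ℝ) (2 * b), (Real.cos u - 1) / u := by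
  have hbne : b ≠ 0 := hb.ne'
  have hb2 : (0:ℝ) < 2 * b := by linarith
  set g : ℝ → ℝ := fun u => Real.cos (b - u) - Real.cos b with hg
  have hgm : Measurable g :=
    ((Real.continuous_cos.comp (continuous_const.sub continuous_id)).sub continuous_const).measurable
  have hidm : Measurable fun u : ℝ => u := measurable_id
  have h2bm : Measurable fun u : ℝ => 2 * b - u := (continuous_const.sub continuous_id).measurable
  -- bounds for g
  have hg1 : ∀ u, |g u| ≤ |u| := fun u => by
    simpa using cos_lip (b - u) b
  have hg2 : ∀ u, |g u| ≤ |2 * b - u| := fun u => by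
    have : Real.cos b = Real.cos (b - 2 * b) := by
      rw [show b - 2 * b = -b by ring, Real.cos_neg]
    rw [hg]; simp only
    rw [this]
    have := cos_lip (b - u) (b - 2 * b)
    simpa using this
  -- integrability of the pieces
  have hS : IntegrableOn (fun u => Real.sin u / u) (Set.Ioc 0 (2 * b)) := by
    apply int_bdd (C := 1) (Real.measurable_sin.div hidm)
    intro u hu
    show |Real.sin u / u| ≤ 1
    rw [abs_div, div_le_one (by rw [abs_pos]; exact hu.1.ne')]
    exact Real.abs_sin_le_abs
  have hC : IntegrableOn (fun u => (Real.cos u - 1) / u) (Set.Ioc 0 (2 * b)) := by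
    apply int_bdd (C := 1) ((Real.measurable_cos.sub measurable_const).div hidm)
    intro u hu
    show |(Real.cos u - 1) / u| ≤ 1
    rw [abs_div, div_le_one (by rw [abs_pos]; exact hu.1.ne')]
    simpa using cos_lip u 0
  have h1 : IntegrableOn (fun u => g u / u) (Set.Ioc 0 (2 * b)) := by
    apply int_bdd (C := 1) (hgm.div hidm)
    intro u hu
    show |g u / u| ≤ 1
    rw [abs_div, div_le_one (by rw [abs_pos]; exact hu.1.ne')]
    exact hg1 u
  have h2 : IntegrableOn (fun u => g u / (2 * b - u)) (Set.Ioc 0 (2 * b)) := by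
    apply int_bdd (C := 1) (hgm.div h2bm)
    intro u hu
    rcases eq_or_lt_of_le hu.2 with h | h
    · have hgz : g u = 0 := by
        rw [h]
        have := hg2 (2 * b); simpa [abs_nonpos_iff] using this
      simp [hgz]
    · show |g u / (2 * b - u)| ≤ 1
      rw [abs_div, div_le_one (by rw [abs_pos]; intro hc; nlinarith [sub_eq_zero.mp hc])]
      exact hg2 u
  -- key pointwise identity on Ioc
  have key : ∀ u ∈ Set.Ioc (0:ℝ) (2 * b),
      b * g u / (u * (2 * b - u)) = (g u / u + g u / (2 * b - u)) / 2 := by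
    intro u hu
    rcases eq_or_lt_of_le hu.2 with h | h
    · have hgz : g u = 0 := by
        rw [h]
        have := hg2 (2 * b); simpa [abs_nonpos_iff] using this
      simp [hgz]
    · have h0 : u ≠ 0 := hu.1.ne'
      have h2b : 2 * b - u ≠ 0 := by intro hc; nlinarith [sub_eq_zero.mp hc]
      rw [div_add_div _ _ h0 h2b, div_div, div_eq_div_iff (mul_ne_zero h0 h2b)
        (mul_ne_zero (mul_ne_zero h0 h2b) two_ne_zero)]
      ring
  have h3 : IntegrableOn (fun u => b * g u / (u * (2 * b - u))) (Set.Ioc 0 (2 * b)) := by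
    apply IntegrableOn.congr_fun _ (fun u hu => (key u hu).symm) measurableSet_Ioc
    exact ((h1.add h2).div_const 2)
  -- substitution symmetry: ∫ g u/(2b-u) = ∫ g u/u
  have symm_eq : (∫ u in (0:ℝ)..(2*b), g u / (2 * b - u)) = ∫ u in (0:ℝ)..(2*b), g u / u := by
    have : (fun u => g u / (2 * b - u)) = fun u => (fun v => g v / v) (2 * b - u) := by
      funext u
      simp only [hg]
      rw [show b - (2 * b - u) = -(b - u) by ring, Real.cos_neg]
    rw [this, intervalIntegral.integral_comp_sub_left (fun v => g v / v) (2 * b)]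
    norm_num
  -- the main integral, via substitution u = b - b r
  set F : ℝ → ℝ := fun u => b ^ 2 * (Real.cos (b - u) - Real.cos b) / (u * (2 * b - u)) with hF
  have hfF : ∀ r : ℝ, (Real.cos (b * r) - Real.cos b) / (1 - r ^ 2) = F (b - b * r) := by
    intro r
    rw [hF]
    simp only
    rw [show b - (b - b * r) = b * r by ring,
        show (b - b * r) * (2 * b - (b - b * r)) = b ^ 2 * (1 - r ^ 2) by ring,
        mul_div_mul_left _ _ (pow_ne_zero 2 hbne)]
  -- integrability on Icc
  have hbound : ∀ r ∈ Set.Icc (-1:ℝ) 1, |(Real.cos (b * r) - Real.cos b) / (1 - r ^ 2)| ≤ b := by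
    intro r hr
    rcases eq_or_ne (1 - r ^ 2) 0 with h | h
    · rw [h, div_zero, abs_zero]; exact hb.le
    · have hpos : 0 < 1 - r ^ 2 := by
        rcases lt_or_eq_of_le (abs_le.mpr ⟨hr.1, hr.2⟩ : |r| ≤ 1) with h' | h'
        · nlinarith [abs_nonneg r, (abs_lt.mp h').1, (abs_lt.mp h').2]
        · exfalso; apply h; nlinarith [sq_abs r]
      rw [abs_div, abs_of_pos hpos, div_le_iff₀ hpos]
      rcases le_total r 0 with hr0 | hr0
      · have hc := cos_lip (b * r) (-b)
        rw [Real.cos_neg] at hc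
        have habs : |b * r - -b| = b * (1 + r) := by
          rw [abs_of_nonneg (by nlinarith [hr.1])]; ring
        rw [habs] at hc
        have hprod : 0 ≤ b * (1 + r) * (-r) :=
          mul_nonneg (mul_nonneg hb.le (by linarith [hr.1])) (by linarith)
        nlinarith [hr.1, hr.2]
      · have hc := cos_lip (b * r) b
        have habs : |b * r - b| = b * (1 - r) := by
          rw [abs_of_nonpos (by nlinarith [hr.2])]; ring
        rw [habs] at hc
        have hprod : 0 ≤ b * (1 - r) * r :=
          mul_nonneg (mul_nonneg hb.le (by linarith [hr.2])) hr0
        nlinarith [hr.1, hr.2]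
  have hint : IntegrableOn (fun r : ℝ => (Real.cos (b * r) - Real.cos b) / (1 - r ^ 2))
      (Set.Icc (-1) 1) := by
    have hm : Measurable fun r : ℝ => (Real.cos (b * r) - Real.cos b) / (1 - r ^ 2) :=
      (((Real.continuous_cos.comp (continuous_const.mul continuous_id)).sub
        continuous_const).measurable).div (continuous_const.sub (continuous_pow 2)).measurable
    apply Measure.integrableOn_of_bounded (measure_Icc_lt_top).ne hm.aestronglyMeasurable
    filter_upwards [ae_restrict_mem measurableSet_Icc] with r hr
    rw [Real.norm_eq_abs]; exact hbound r hr
  refine ⟨hint, ?_⟩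
  -- convert to interval integrals
  rw [MeasureTheory.integral_Icc_eq_integral_Ioc,
      ← intervalIntegral.integral_of_le (by norm_num : (-1:ℝ) ≤ 1),
      ← intervalIntegral.integral_of_le hb2.le, ← intervalIntegral.integral_of_le hb2.le]
  calc (∫ r in (-1:ℝ)..1, (Real.cos (b * r) - Real.cos b) / (1 - r ^ 2))
      = ∫ r in (-1:ℝ)..1, F (b - b * r) := by
        apply intervalIntegral.integral_congr; intro r _; exact hfF r
    _ = b⁻¹ • ∫ x in (b * (-1))..(b * 1), F (b - x) := by
        exact intervalIntegral.integral_comp_mul_left (fun x => F (b - x)) hbne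
    _ = b⁻¹ • ∫ u in (b - b * 1)..(b - b * (-1)), F u := by
        rw [intervalIntegral.integral_comp_sub_left F b]
    _ = b⁻¹ • ∫ u in (0:ℝ)..(2*b), F u := by
        rw [show b - b * 1 = (0:ℝ) by ring, show b - b * (-1) = 2 * b by ring]
    _ = ∫ u in (0:ℝ)..(2*b), b * g u / (u * (2 * b - u)) := by
        rw [← intervalIntegral.integral_smul]
        apply intervalIntegral.integral_congr; intro u _
        simp only [smul_eq_mul, hF, hg]
        rw [← mul_div_assoc]
        congr 1
        field_simp
    _ = ∫ u in (0:ℝ)..(2*b), (g u / u + g u / (2 * b - u)) / 2 := by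
        rw [intervalIntegral.integral_of_le hb2.le, intervalIntegral.integral_of_le hb2.le]
        exact setIntegral_congr_fun measurableSet_Ioc key
    _ = ((∫ u in (0:ℝ)..(2*b), g u / u) + ∫ u in (0:ℝ)..(2*b), g u / (2 * b - u)) / 2 := by
        rw [intervalIntegral.integral_div, intervalIntegral.integral_add]
        · exact (intervalIntegrable_iff_integrableOn_Ioc_of_le hb2.le).mpr h1
        · exact (intervalIntegrable_iff_integrableOn_Ioc_of_le hb2.le).mpr h2
    _ = ∫ u in (0:ℝ)..(2*b), g u / u := by rw [symm_eq]; ring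
    _ = ∫ u in (0:ℝ)..(2*b), (Real.sin b * (Real.sin u / u) + Real.cos b * ((Real.cos u - 1) / u)) := by
        apply intervalIntegral.integral_congr; intro u _
        rw [hg]; simp only
        rw [Real.cos_sub, ← mul_div_assoc, ← mul_div_assoc, ← add_div]
        ring_nf
    _ = Real.sin b * (∫ u in (0:ℝ)..(2*b), Real.sin u / u)
        + Real.cos b * ∫ u in (0:ℝ)..(2*b), (Real.cos u - 1) / u := by
        rw [intervalIntegral.integral_add, intervalIntegral.integral_const_mul,
            intervalIntegral.integral_const_mul]
        · exact ((intervalIntegrable_iff_integrableOn_Ioc_of_le hb2.le).mpr hS).const_mul _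
        · exact ((intervalIntegrable_iff_integrableOn_Ioc_of_le hb2.le).mpr hC).const_mul _
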